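/- Let 𝐌1 = M2⁻ᵀ M1 with M1, M2 invertible, and suppose L1 arises from an 𝐌1-invariant subspace as in the invariant subspace construction (so 𝐇1 = 𝐀1 + 𝐁1 L1 is invertible) and L2 is defined via L2ᵀ = −(B1 + D1 L1)(A1 + B1ᵀ L1)⁻¹. Then the matrix 𝐇2' := 𝐃2 − L2 𝐁2 (the block from the triangularization of 𝐌2 = M1⁻ᵀ M2) satisfies 𝐇2' = (A1 + B1ᵀ L1)⁻ᵀ 𝐇1⁻ᵀ (A1 + B1ᵀ L1)ᵀ; in particular 𝐇2' is similar to 𝐇1⁻ᵀ and spec(𝐇2') = {1/λ : λ ∈ spec(𝐇1)}. -/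

import Mathlib

open Matrix

lemma spectrum_transpose_eq {n : ℕ} (M : Matrix (Fin n) (Fin n) ℝ) :
    spectrum ℝ Mᵀ = spectrum ℝ M := by
  ext z
  simp only [spectrum.mem_iff, Matrix.isUnit_iff_isUnit_det, not_iff_not]
  rw [show algebraMap ℝ (Matrix (Fin n) (Fin n) ℝ) z - Mᵀ =
      (algebraMap ℝ (Matrix (Fin n) (Fin n) ℝ) z - M)ᵀ by
    simp [Matrix.algebraMap_eq_diagonal, Matrix.transpose_sub, Matrix.diagonal_transpose],
    Matrix.det_transpose]

lemma spectrum_inv_eq {n : ℕ} (M : Matrix (Fin n) (Fin n) ℝ) (h : IsUnit M.det) :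
    spectrum ℝ M⁻¹ = {z : ℝ | ∃ l ∈ spectrum ℝ M, z = l⁻¹} := by
  have hU : IsUnit M := (Matrix.isUnit_iff_isUnit_det M).mpr h
  have hcoe : (↑hU.unit⁻¹ : Matrix (Fin n) (Fin n) ℝ) = M⁻¹ := by
    rw [Matrix.coe_units_inv, hU.unit_spec]
  have hmi := spectrum.map_inv (𝕜 := ℝ) hU.unit
  rw [hU.unit_spec, hcoe] at hmi
  rw [← hmi]
  ext z
  simp only [Set.mem_inv, Set.mem_setOf_eq]
  constructor
  · intro hz
    have hz0 : z ≠ 0 := by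
      intro h0
      rw [h0, _root_.inv_zero] at hz
      exact spectrum.zero_notMem ℝ hU hz
    exact ⟨z⁻¹, hz, (inv_inv z).symm⟩
  · rintro ⟨l, hl, rfl⟩
    have hl0 : l ≠ 0 := fun h0 => spectrum.zero_notMem ℝ hU (h0 ▸ hl)
    rwa [inv_inv]

/-- with `M1 = [[A1, B1ᵀ],[B1, D1]]`, `M2 = [[D2, B2],[B2ᵀ, A2]]` invertible,
`bM1 = M2⁻ᵀ M1` and `bM2 = M1⁻ᵀ M2`, suppose `L1` arises from an `bM1`-invariant subspace,
i.e. `bM1 [I; L1] = [I; L1] 𝐇1` where `𝐇1 = 𝐀1 + 𝐁1 L1` is invertible, and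
`L2ᵀ = -(B1 + D1 L1)(A1 + B1ᵀ L1)⁻¹` with `A1 + B1ᵀ L1` invertible. Then
`𝐇2' = 𝐃2 - L2 𝐁2` satisfies `𝐇2' = (A1 + B1ᵀ L1)⁻ᵀ 𝐇1⁻ᵀ (A1 + B1ᵀ L1)ᵀ` — so `𝐇2'` is
similar to `𝐇1⁻ᵀ` — and `spec(𝐇2') = {1/λ : λ ∈ spec(𝐇1)}`. -/
theorem stmt_15 {d1 d2 : ℕ}
    (A1 : Matrix (Fin d1) (Fin d1) ℝ) (B1 : Matrix (Fin d2) (Fin d1) ℝ)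
    (D1 : Matrix (Fin d2) (Fin d2) ℝ)
    (A2 : Matrix (Fin d2) (Fin d2) ℝ) (B2 : Matrix (Fin d1) (Fin d2) ℝ)
    (D2 : Matrix (Fin d1) (Fin d1) ℝ)
    (L1 : Matrix (Fin d2) (Fin d1) ℝ) (L2 : Matrix (Fin d1) (Fin d2) ℝ)
    (M1 M2 bM1 bM2 : Matrix (Fin d1 ⊕ Fin d2) (Fin d1 ⊕ Fin d2) ℝ)
    (hM1 : M1 = Matrix.fromBlocks A1 B1ᵀ B1 D1)
    (hM2 : M2 = Matrix.fromBlocks D2 B2 B2ᵀ A2)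
    (hM1inv : IsUnit M1.det) (hM2inv : IsUnit M2.det)
    (hbM1 : bM1 = (M2ᵀ)⁻¹ * M1) (hbM2 : bM2 = (M1ᵀ)⁻¹ * M2)
    (H1 : Matrix (Fin d1) (Fin d1) ℝ)
    (hH1 : H1 = bM1.toBlocks₁₁ + bM1.toBlocks₁₂ * L1)
    (hinvsub : bM1 * Matrix.fromRows (1 : Matrix (Fin d1) (Fin d1) ℝ) L1 =
      Matrix.fromRows (1 : Matrix (Fin d1) (Fin d1) ℝ) L1 * H1)
    (hH1inv : IsUnit H1.det)
    (hAinv : IsUnit (A1 + B1ᵀ * L1).det)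
    (hL2 : L2ᵀ = -((B1 + D1 * L1) * (A1 + B1ᵀ * L1)⁻¹)) :
    bM2.toBlocks₁₁ - L2 * bM2.toBlocks₂₁ =
      ((A1 + B1ᵀ * L1)⁻¹)ᵀ * (H1⁻¹)ᵀ * (A1 + B1ᵀ * L1)ᵀ ∧
    spectrum ℝ (bM2.toBlocks₁₁ - L2 * bM2.toBlocks₂₁) =
      {z : ℝ | ∃ l ∈ spectrum ℝ H1, z = l⁻¹} := by
  set E := A1 + B1ᵀ * L1 with hE
  set F := B1 + D1 * L1 with hF
  set u := Matrix.fromRows (1 : Matrix (Fin d1) (Fin d1) ℝ) L1 with hu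
  have hM2t : IsUnit (M2ᵀ).det := by rwa [Matrix.det_transpose]
  have hM1t : IsUnit (M1ᵀ).det := by rwa [Matrix.det_transpose]
  have hH1t : IsUnit (H1ᵀ).det := by rwa [Matrix.det_transpose]
  have hEt : IsUnit (Eᵀ).det := by rwa [Matrix.det_transpose]
  -- key: M1 * u = M2ᵀ * (u * H1)
  have key1 : M1 * u = M2ᵀ * (u * H1) := by
    rw [hbM1, Matrix.mul_assoc] at hinvsub
    rw [← hinvsub, Matrix.mul_nonsing_inv_cancel_left _ _ hM2t]
  -- compute M1 * u
  have hM1u : M1 * u = Matrix.fromRows E F := by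
    rw [hM1, hu, Matrix.fromBlocks_mul_fromRows]
    simp [hE, hF]
  -- transpose of key1, then cancel
  have key2 : H1ᵀ * (uᵀ * M2) = uᵀ * M1ᵀ := by
    have h := congrArg Matrix.transpose key1
    simp only [Matrix.transpose_mul, Matrix.transpose_transpose] at h
    rw [h, Matrix.mul_assoc]
  have key3 : uᵀ * M2 = (H1ᵀ)⁻¹ * (uᵀ * M1ᵀ) := by
    rw [← key2, Matrix.nonsing_inv_mul_cancel_left _ _ hH1t]
  have key4 : (uᵀ * M1ᵀ) * bM2 = (H1ᵀ)⁻¹ * (uᵀ * M1ᵀ) := by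
    rw [hbM2, Matrix.mul_assoc uᵀ M1ᵀ,
      Matrix.mul_nonsing_inv_cancel_left _ _ hM1t, key3]
  have hW : uᵀ * M1ᵀ = Matrix.fromCols Eᵀ Fᵀ := by
    rw [← Matrix.transpose_mul, hM1u, Matrix.transpose_fromRows]
  rw [hW] at key4
  -- block decomposition of bM2
  have hblocks : bM2 = Matrix.fromBlocks bM2.toBlocks₁₁ bM2.toBlocks₁₂
      bM2.toBlocks₂₁ bM2.toBlocks₂₂ := (Matrix.fromBlocks_toBlocks bM2).symm
  rw [hblocks, Matrix.fromCols_mul_fromBlocks, Matrix.mul_fromCols,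
    Matrix.fromCols_ext_iff] at key4
  have key5 : Eᵀ * bM2.toBlocks₁₁ + Fᵀ * bM2.toBlocks₂₁ = (H1ᵀ)⁻¹ * Eᵀ := key4.1
  -- L2 = -((Eᵀ)⁻¹ * Fᵀ)
  have hL2' : L2 = -((Eᵀ)⁻¹ * Fᵀ) := by
    have := congrArg Matrix.transpose hL2
    rw [Matrix.transpose_transpose, Matrix.transpose_neg, Matrix.transpose_mul,
      Matrix.transpose_nonsing_inv] at this
    exact this
  have main : bM2.toBlocks₁₁ - L2 * bM2.toBlocks₂₁ = (Eᵀ)⁻¹ * (H1ᵀ)⁻¹ * Eᵀ := by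
    rw [hL2', Matrix.neg_mul, sub_neg_eq_add, Matrix.mul_assoc ((Eᵀ)⁻¹) Fᵀ,
      Matrix.mul_assoc ((Eᵀ)⁻¹) ((H1ᵀ)⁻¹), ← key5, Matrix.mul_add,
      Matrix.nonsing_inv_mul_cancel_left _ _ hEt]
  have main' : bM2.toBlocks₁₁ - L2 * bM2.toBlocks₂₁ = (E⁻¹)ᵀ * (H1⁻¹)ᵀ * Eᵀ := by
    rw [main, Matrix.transpose_nonsing_inv, Matrix.transpose_nonsing_inv]
  refine ⟨main', ?_⟩
  -- spectrum
  have hEu : IsUnit Eᵀ := (Matrix.isUnit_iff_isUnit_det _).mpr hEt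
  have hcoe : (↑hEu.unit⁻¹ : Matrix (Fin d1) (Fin d1) ℝ) = (Eᵀ)⁻¹ := by
    rw [Matrix.coe_units_inv, hEu.unit_spec]
  rw [main]
  have : (Eᵀ)⁻¹ * (H1ᵀ)⁻¹ * Eᵀ =
      (↑hEu.unit⁻¹ : Matrix (Fin d1) (Fin d1) ℝ) * (H1ᵀ)⁻¹ *
        (↑hEu.unit : Matrix (Fin d1) (Fin d1) ℝ) := by rw [hcoe, hEu.unit_spec]
  rw [this, spectrum.units_conjugate', ← Matrix.transpose_nonsing_inv,
    spectrum_transpose_eq, spectrum_inv_eq H1 hH1inv]
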